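/- arXiv:1912.07152 — 3 statements merged into one kernel-verified Lean document; each statement's English description precedes it below -/
import Mathlib

section
/- The set T(M) = {U Xᵀ - X Uᵀ : X ∈ ℝ^{n×r}} is a linear subspace of the real skew-symmetric n×n matrices and equals {Δ M + M Δᵀ : Δ ∈ ℝ^{n×n}}, where M = U D Vᵀ is a compact SVD of a rank-r skew-symmetric matrix M. -/
open Matrix

/-- For a rank-`r` real skew-symmetric matrix `M` with compact SVD `M = U D Vᵀ`,
the set `T(M) = {U Xᵀ - X Uᵀ : X ∈ ℝ^{n×r}}` is a linear subspace consisting of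
skew-symmetric matrices, and it equals `W = {Δ M + M Δᵀ : Δ ∈ ℝ^{n×n}}`. -/
theorem tangent_space_rank_manifold_skew {n r : ℕ}
    (M : Matrix (Fin n) (Fin n) ℝ) (hM : Mᵀ = -M) (hrank : M.rank = r)
    (U V : Matrix (Fin n) (Fin r) ℝ) (d : Fin r → ℝ)
    (hU : Uᵀ * U = 1) (hV : Vᵀ * V = 1) (hd : ∀ i, d i ≠ 0)
    (hsvd : M = U * Matrix.diagonal d * Vᵀ) :
    (∃ T : Submodule ℝ (Matrix (Fin n) (Fin n) ℝ),
      (T : Set (Matrix (Fin n) (Fin n) ℝ)) =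
        {A | ∃ X : Matrix (Fin n) (Fin r) ℝ, A = U * Xᵀ - X * Uᵀ}) ∧
    (∀ A ∈ {A : Matrix (Fin n) (Fin n) ℝ |
        ∃ X : Matrix (Fin n) (Fin r) ℝ, A = U * Xᵀ - X * Uᵀ}, Aᵀ = -A) ∧
    {A : Matrix (Fin n) (Fin n) ℝ |
        ∃ X : Matrix (Fin n) (Fin r) ℝ, A = U * Xᵀ - X * Uᵀ} =
      {A : Matrix (Fin n) (Fin n) ℝ |
        ∃ Δ : Matrix (Fin n) (Fin n) ℝ, A = Δ * M + M * Δᵀ} := by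
  let f : Matrix (Fin n) (Fin r) ℝ →ₗ[ℝ] Matrix (Fin n) (Fin n) ℝ :=
    { toFun := fun X => U * Xᵀ - X * Uᵀ
      map_add' := fun X Y => by
        simp only [Matrix.transpose_add, Matrix.mul_add, Matrix.add_mul]; abel
      map_smul' := fun c X => by
        simp [Matrix.transpose_smul, Matrix.mul_smul, Matrix.smul_mul, smul_sub] }
  refine ⟨?_, ?_, ?_⟩
  · refine ⟨LinearMap.range f, ?_⟩
    ext A
    simp [f, LinearMap.mem_range, eq_comm]
  · rintro A ⟨X, rfl⟩
    simp [Matrix.transpose_sub, Matrix.transpose_mul]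
  · ext A
    constructor
    · rintro ⟨X, rfl⟩
      refine ⟨X * Matrix.diagonal (fun i => (d i)⁻¹) * Vᵀ, ?_⟩
      have hdd : Matrix.diagonal d * Matrix.diagonal (fun i => (d i)⁻¹) = 1 := by
        have h1 : (fun i => d i * (d i)⁻¹) = fun _ => (1:ℝ) :=
          funext fun i => mul_inv_cancel₀ (hd i)
        rw [Matrix.diagonal_mul_diagonal, h1, Matrix.diagonal_one]
      have hMD : M * (X * Matrix.diagonal (fun i => (d i)⁻¹) * Vᵀ)ᵀ = U * Xᵀ := by
        rw [hsvd]
        simp only [Matrix.transpose_mul, Matrix.transpose_transpose,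
          Matrix.diagonal_transpose]
        calc U * Matrix.diagonal d * Vᵀ * (V * (Matrix.diagonal (fun i => (d i)⁻¹) * Xᵀ))
            = U * (Matrix.diagonal d * Matrix.diagonal (fun i => (d i)⁻¹)) * Xᵀ := by
              rw [Matrix.mul_assoc (U * Matrix.diagonal d), ← Matrix.mul_assoc Vᵀ, hV,
                Matrix.one_mul]
              simp only [Matrix.mul_assoc]
          _ = U * Xᵀ := by rw [hdd, Matrix.mul_one]
      have hDM : (X * Matrix.diagonal (fun i => (d i)⁻¹) * Vᵀ) * M = -(X * Uᵀ) := by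
        have : (X * Matrix.diagonal (fun i => (d i)⁻¹) * Vᵀ) * M
            = ((Mᵀ) * (X * Matrix.diagonal (fun i => (d i)⁻¹) * Vᵀ)ᵀ)ᵀ := by
          simp [Matrix.transpose_mul]
        rw [this, hM, Matrix.neg_mul, hMD, Matrix.transpose_neg, Matrix.transpose_mul,
          Matrix.transpose_transpose]
      rw [hMD, hDM]
      abel
    · rintro ⟨Δ, rfl⟩
      refine ⟨Δ * V * Matrix.diagonal d, ?_⟩
      have h1 : U * (Δ * V * Matrix.diagonal d)ᵀ = M * Δᵀ := by
        have : Mᵀ = V * Matrix.diagonal d * Uᵀ := by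
          rw [hsvd]; simp [Matrix.transpose_mul, Matrix.mul_assoc]
        calc U * (Δ * V * Matrix.diagonal d)ᵀ
            = (Δ * V * Matrix.diagonal d * Uᵀ)ᵀ := by
              simp [Matrix.transpose_mul]
          _ = (Δ * Mᵀ)ᵀ := by rw [this]; simp only [Matrix.mul_assoc]
          _ = M * Δᵀ := by simp [Matrix.transpose_mul]
      have h2 : (Δ * V * Matrix.diagonal d) * Uᵀ = -(Δ * M) := by
        have hMT : Mᵀ = V * Matrix.diagonal d * Uᵀ := by
          rw [hsvd]; simp [Matrix.transpose_mul, Matrix.mul_assoc]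
        calc (Δ * V * Matrix.diagonal d) * Uᵀ = Δ * Mᵀ := by
              rw [hMT]; simp only [Matrix.mul_assoc]
          _ = -(Δ * M) := by rw [hM]; simp
      rw [h1, h2]
      abel
end

section
/- For the objective f(S,L,t) = t‖S‖₁ + (1−t)‖L‖_*, subject to S + L = C with C ≠ 0: for all t with 0 ≤ t < 1/(n+1), the point (C, 0) is the unique minimizer; i.e., for any N ≠ 0, f(C−N, N, t) > f(C, 0, t). -/
open Matrix

/-- The entrywise ℓ1 norm of a square real matrix. -/
noncomputable def entrywiseL1 {n : ℕ} (A : Matrix (Fin n) (Fin n) ℝ) : ℝ :=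
  ∑ i, ∑ j, |A i j|

/-- The nuclear norm of a square real matrix: the sum of its singular values. -/
noncomputable def nuclearNorm {n : ℕ} (A : Matrix (Fin n) (Fin n) ℝ) : ℝ :=
  ∑ i, Real.sqrt ((Matrix.isHermitian_conjTranspose_mul_self A).eigenvalues i)

/-- The objective `f(S, L, t) = t ‖S‖₁ + (1 - t) ‖L‖_*`. -/
noncomputable def objF {n : ℕ} (S L : Matrix (Fin n) (Fin n) ℝ) (t : ℝ) : ℝ :=
  t * entrywiseL1 S + (1 - t) * nuclearNorm L

section AuxSmallT
variable {n : ℕ}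

lemma trace_eq_sum_eig {A : Matrix (Fin n) (Fin n) ℝ} (hA : A.IsHermitian) :
    A.trace = ∑ i, hA.eigenvalues i := by
  rw [hA.trace_eq_sum_eigenvalues]
  simp

lemma psd_tm (A : Matrix (Fin n) (Fin n) ℝ) : (Aᴴ * A).PosSemidef :=
  Matrix.posSemidef_conjTranspose_mul_self A

lemma eig_nonneg (A : Matrix (Fin n) (Fin n) ℝ) (i : Fin n) :
    0 ≤ (Matrix.isHermitian_conjTranspose_mul_self A).eigenvalues i :=
  (psd_tm A).eigenvalues_nonneg i

lemma trace_tm (A : Matrix (Fin n) (Fin n) ℝ) :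
    (Aᴴ * A).trace = ∑ i, ∑ j, A i j ^ 2 := by
  rw [Finset.sum_comm]
  simp [Matrix.trace, Matrix.mul_apply, Matrix.diag, Matrix.conjTranspose_apply, sq]

lemma nuclearNorm_nonneg (A : Matrix (Fin n) (Fin n) ℝ) : 0 ≤ nuclearNorm A :=
  Finset.sum_nonneg fun i _ => Real.sqrt_nonneg _

lemma sum_sq_eq (A : Matrix (Fin n) (Fin n) ℝ) :
    ∑ i, ∑ j, A i j ^ 2
      = ∑ i, (Real.sqrt ((Matrix.isHermitian_conjTranspose_mul_self A).eigenvalues i)) ^ 2 := by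
  rw [← trace_tm, trace_eq_sum_eig (Matrix.isHermitian_conjTranspose_mul_self A)]
  exact Finset.sum_congr rfl fun i _ => (Real.sq_sqrt (eig_nonneg A i)).symm

lemma nuclearNorm_pos {A : Matrix (Fin n) (Fin n) ℝ} (hA : A ≠ 0) : 0 < nuclearNorm A := by
  rcases (nuclearNorm_nonneg A).lt_or_eq with h | h
  · exact h
  exfalso
  apply hA
  have h0 : ∀ i ∈ Finset.univ, Real.sqrt ((Matrix.isHermitian_conjTranspose_mul_self A).eigenvalues i) = 0 :=
    (Finset.sum_eq_zero_iff_of_nonneg fun i _ => Real.sqrt_nonneg _).mp h.symm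
  have hsq : ∑ i, ∑ j, A i j ^ 2 = 0 := by
    rw [sum_sq_eq A]
    exact Finset.sum_eq_zero fun i _ => by rw [h0 i (Finset.mem_univ i)]; ring
  ext i j
  have := (Finset.sum_eq_zero_iff_of_nonneg fun i _ =>
    Finset.sum_nonneg fun j _ => sq_nonneg (A i j)).mp hsq i (Finset.mem_univ i)
  have := (Finset.sum_eq_zero_iff_of_nonneg fun j _ => sq_nonneg (A i j)).mp this j
    (Finset.mem_univ j)
  simpa [pow_eq_zero_iff] using this

lemma l1_le_n_mul_nuclear (A : Matrix (Fin n) (Fin n) ℝ) :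
    entrywiseL1 A ≤ (n : ℝ) * nuclearNorm A := by
  have hL1 : entrywiseL1 A = ∑ p : Fin n × Fin n, |A p.1 p.2| := by
    rw [entrywiseL1, ← Finset.sum_product']
    rfl
  have h1 : (entrywiseL1 A) ^ 2 ≤ (n : ℝ) ^ 2 * ∑ i, ∑ j, A i j ^ 2 := by
    rw [hL1]
    calc (∑ p : Fin n × Fin n, |A p.1 p.2|) ^ 2
        ≤ ((Finset.univ : Finset (Fin n × Fin n)).card : ℝ)
            * ∑ p : Fin n × Fin n, |A p.1 p.2| ^ 2 := by
          have h := sq_sum_le_card_mul_sum_sq (s := (Finset.univ : Finset (Fin n × Fin n)))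
            (f := fun p : Fin n × Fin n => |A p.1 p.2|)
          exact_mod_cast h
      _ = (n : ℝ) ^ 2 * ∑ i, ∑ j, A i j ^ 2 := by
          rw [← Finset.sum_product']
          congr 1
          · simp [sq]
          · exact Finset.sum_congr rfl fun p _ => sq_abs _
  have h2 : ∑ i, ∑ j, A i j ^ 2 ≤ (nuclearNorm A) ^ 2 := by
    rw [sum_sq_eq A]
    exact Finset.sum_sq_le_sq_sum_of_nonneg fun i _ => Real.sqrt_nonneg _
  have h3 : (entrywiseL1 A) ^ 2 ≤ ((n : ℝ) * nuclearNorm A) ^ 2 := by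
    rw [mul_pow]
    exact h1.trans (by nlinarith [sq_nonneg ((n : ℝ))])
  have hl1 : 0 ≤ entrywiseL1 A := Finset.sum_nonneg fun i _ =>
    Finset.sum_nonneg fun j _ => abs_nonneg _
  have hrhs : 0 ≤ (n : ℝ) * nuclearNorm A :=
    mul_nonneg (Nat.cast_nonneg n) (nuclearNorm_nonneg A)
  exact (pow_le_pow_iff_left₀ hl1 hrhs two_ne_zero).mp h3

lemma l1_triangle (C N : Matrix (Fin n) (Fin n) ℝ) :
    entrywiseL1 C ≤ entrywiseL1 (C - N) + entrywiseL1 N := by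
  rw [entrywiseL1, entrywiseL1, entrywiseL1, ← Finset.sum_add_distrib]
  refine Finset.sum_le_sum fun i _ => ?_
  rw [← Finset.sum_add_distrib]
  refine Finset.sum_le_sum fun j _ => ?_
  calc |C i j| = |(C - N) i j + N i j| := by simp
    _ ≤ |(C - N) i j| + |N i j| := abs_add_le _ _

lemma nuclearNorm_zero : nuclearNorm (0 : Matrix (Fin n) (Fin n) ℝ) = 0 := by
  have h0 : ∀ i, (Matrix.isHermitian_conjTranspose_mul_self (0 : Matrix (Fin n) (Fin n) ℝ)).eigenvalues i = 0 := by
    intro i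
    have hsum : ∑ i, (Matrix.isHermitian_conjTranspose_mul_self (0 : Matrix (Fin n) (Fin n) ℝ)).eigenvalues i = 0 := by
      rw [← trace_eq_sum_eig, trace_tm]
      simp
    exact (Finset.sum_eq_zero_iff_of_nonneg fun i _ => eig_nonneg 0 i).mp hsum i
      (Finset.mem_univ i)
  rw [nuclearNorm]
  exact Finset.sum_eq_zero fun i _ => by rw [h0 i, Real.sqrt_zero]

end AuxSmallT

/-- For `0 ≤ t < 1/(n+1)` and `C ≠ 0`, the point `(C, 0)` is the unique
minimizer of `f(S, L, t)` over `S + L = C`: for any `N ≠ 0`,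
`f(C - N, N, t) > f(C, 0, t)`. -/
theorem small_t_unique_minimizer {n : ℕ} (C : Matrix (Fin n) (Fin n) ℝ)
    (hC : C ≠ 0) (t : ℝ) (ht0 : 0 ≤ t) (ht1 : t < 1 / ((n : ℝ) + 1))
    (N : Matrix (Fin n) (Fin n) ℝ) (hN : N ≠ 0) :
    objF C 0 t < objF (C - N) N t := by
  have hn1 : (0 : ℝ) < (n : ℝ) + 1 := by positivity
  have htn : t * ((n : ℝ) + 1) < 1 := by
    rwa [lt_div_iff₀ hn1] at ht1
  have hnn := nuclearNorm_pos hN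
  have htri := l1_triangle C N
  have hl1 := l1_le_n_mul_nuclear N
  rw [objF, objF, nuclearNorm_zero]
  nlinarith [mul_nonneg ht0 (sub_nonneg.mpr hl1), mul_le_mul_of_nonneg_left hl1 ht0,
    mul_le_mul_of_nonneg_left htri ht0, mul_pos (sub_pos.mpr (by nlinarith : t * (n:ℝ) < 1 - t)) hnn]
end

section
/- Every real skew-symmetric n×n matrix M of rank r can be written M = P Q Pᵀ where P is invertible and Q is block diagonal with r/2 copies of the 2×2 block [[0,1],[-1,0]] followed by zeros (Youla decomposition). -/
open Matrix

/-- The canonical skew-symmetric matrix with `r/2` copies of `[[0,1],[-1,0]]` on the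
diagonal (occupying the top-left `r × r` block) and zeros elsewhere. -/
def youlaQ (n r : ℕ) : Matrix (Fin n) (Fin n) ℝ := fun i j =>
  if i.val % 2 = 0 ∧ j.val = i.val + 1 ∧ j.val < r then 1
  else if j.val % 2 = 0 ∧ i.val = j.val + 1 ∧ i.val < r then -1
  else 0

namespace YoulaAux

lemma youlaQ_eq_one {n r : ℕ} {i j : Fin n} (h1 : i.val % 2 = 0)
    (h2 : j.val = i.val + 1) (h3 : j.val < r) : youlaQ n r i j = 1 := by
  simp only [youlaQ]
  rw [if_pos ⟨h1, h2, h3⟩]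

lemma youlaQ_eq_neg_one {n r : ℕ} {i j : Fin n} (h1 : j.val % 2 = 0)
    (h2 : i.val = j.val + 1) (h3 : i.val < r) : youlaQ n r i j = -1 := by
  simp only [youlaQ]
  rw [if_neg (by omega), if_pos ⟨h1, h2, h3⟩]

lemma youlaQ_eq_zero {n r : ℕ} {i j : Fin n}
    (hA : ¬(i.val % 2 = 0 ∧ j.val = i.val + 1 ∧ j.val < r))
    (hB : ¬(j.val % 2 = 0 ∧ i.val = j.val + 1 ∧ i.val < r)) : youlaQ n r i j = 0 := by
  simp only [youlaQ]
  rw [if_neg hA, if_neg hB]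

/-- Congruence of square real matrices. -/
def Cong {k : ℕ} (A B : Matrix (Fin k) (Fin k) ℝ) : Prop :=
  ∃ P : Matrix (Fin k) (Fin k) ℝ, IsUnit P.det ∧ P * A * Pᵀ = B

lemma cong_trans {k : ℕ} {A B C : Matrix (Fin k) (Fin k) ℝ}
    (h1 : Cong A B) (h2 : Cong B C) : Cong A C := by
  obtain ⟨P, hP, hPA⟩ := h1
  obtain ⟨Q, hQ, hQB⟩ := h2
  refine ⟨Q * P, by rw [Matrix.det_mul]; exact hQ.mul hP, ?_⟩
  rw [Matrix.transpose_mul, ← hQB, ← hPA]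
  noncomm_ring

lemma cong_skew {k : ℕ} {A B : Matrix (Fin k) (Fin k) ℝ}
    (h : Cong A B) (hA : Aᵀ = -A) : Bᵀ = -B := by
  obtain ⟨P, _, hPA⟩ := h
  rw [← hPA]
  simp only [Matrix.transpose_mul, Matrix.transpose_transpose, hA]
  noncomm_ring

lemma cong_submatrix {k : ℕ} (σ : Equiv.Perm (Fin k)) (A : Matrix (Fin k) (Fin k) ℝ) :
    Cong A (A.submatrix σ σ) := by
  refine ⟨σ.toPEquiv.toMatrix, ?_, ?_⟩
  · rw [show (σ.toPEquiv.toMatrix : Matrix (Fin k) (Fin k) ℝ) = σ.permMatrix ℝ from rfl,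
      Matrix.det_permutation]
    rcases Int.units_eq_one_or (Equiv.Perm.sign σ) with h | h <;> simp [h]
  · rw [PEquiv.toMatrix_toPEquiv_mul]
    have ht : (σ.toPEquiv.toMatrix : Matrix (Fin k) (Fin k) ℝ)ᵀ =
        (σ⁻¹).toPEquiv.toMatrix := by
      rw [← PEquiv.toMatrix_symm, ← Equiv.toPEquiv_symm]
      rfl
    rw [ht, PEquiv.mul_toMatrix_toPEquiv]
    ext i j
    simp [Matrix.submatrix_apply, Equiv.Perm.inv_def]

lemma cong_diagonal {k : ℕ} (d : Fin k → ℝ) (hd : ∀ i, d i ≠ 0)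
    (A : Matrix (Fin k) (Fin k) ℝ) :
    Cong A (Matrix.diagonal d * A * Matrix.diagonal d) := by
  refine ⟨Matrix.diagonal d, ?_, by rw [Matrix.diagonal_transpose]⟩
  rw [Matrix.det_diagonal]
  exact isUnit_iff_ne_zero.2 (Finset.prod_ne_zero_iff.2 fun i _ => hd i)

lemma vecMulVec_mul {k l m : ℕ} (u : Fin k → ℝ) (v : Fin l → ℝ)
    (N : Matrix (Fin l) (Fin m) ℝ) :
    Matrix.vecMulVec u v * N = Matrix.vecMulVec u (v ᵥ* N) := by
  ext a b
  simp [Matrix.vecMulVec_apply, Matrix.mul_apply, Matrix.vecMul, dotProduct,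
    Finset.mul_sum, mul_assoc]

lemma mul_vecMulVec {k l m : ℕ} (N : Matrix (Fin k) (Fin l) ℝ) (u : Fin l → ℝ)
    (v : Fin m → ℝ) :
    N * Matrix.vecMulVec u v = Matrix.vecMulVec (N *ᵥ u) v := by
  ext a b
  simp [Matrix.vecMulVec_apply, Matrix.mul_apply, Matrix.mulVec, dotProduct,
    Finset.sum_mul, mul_assoc]

lemma transpose_vecMulVec {k l : ℕ} (u : Fin k → ℝ) (v : Fin l → ℝ) :
    (Matrix.vecMulVec u v)ᵀ = Matrix.vecMulVec v u := by
  ext a b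
  simp [Matrix.vecMulVec_apply, mul_comm]

/-- The clearing step: if `N` is skew with `N 0 1 = 1`, we can clear the rest of
the first two rows and columns by a congruence. -/
lemma cong_clear {k : ℕ} (N : Matrix (Fin (k + 2)) (Fin (k + 2)) ℝ)
    (hskew : Nᵀ = -N) (h01 : N 0 1 = 1) :
    ∃ N2 : Matrix (Fin (k + 2)) (Fin (k + 2)) ℝ, Cong N N2 ∧ N2 0 1 = 1 ∧
      ∀ a : Fin (k + 2), 2 ≤ a.val → N2 a 0 = 0 ∧ N2 a 1 = 0 := by
  have hdiag : ∀ a, N a a = 0 := by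
    intro a
    have := congrFun (congrFun hskew a) a
    simp only [Matrix.transpose_apply, Matrix.neg_apply] at this
    linarith
  have h10 : N 1 0 = -1 := by
    have := congrFun (congrFun hskew 0) 1
    simp only [Matrix.transpose_apply, Matrix.neg_apply] at this
    rw [this, h01]
  set u : Fin (k + 2) → ℝ := fun a => if 2 ≤ a.val then -N a 1 else 0 with hu
  set w : Fin (k + 2) → ℝ := fun a => if 2 ≤ a.val then N a 0 else 0 with hw
  set e0 : Fin (k + 2) → ℝ := Pi.single 0 1 with he0
  set e1 : Fin (k + 2) → ℝ := Pi.single 1 1 with he1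
  have h1ne0 : (1 : Fin (k + 2)) ≠ 0 := by
    intro h
    have := congrArg Fin.val h
    simp at this
  have hu0 : u 0 = 0 := by simp [hu]
  have hu1 : u 1 = 0 := by simp [hu]
  have hw0 : w 0 = 0 := by simp [hw]
  have hw1 : w 1 = 0 := by simp [hw]
  set E : Matrix (Fin (k + 2)) (Fin (k + 2)) ℝ :=
    1 + Matrix.vecMulVec u e0 + Matrix.vecMulVec w e1 with hE
  have hEdet : E.det = 1 := by
    have htri : E.BlockTriangular OrderDual.toDual := by
      intro i j hij
      have hij' : i < j := hij
      have hjne0 : j ≠ 0 := by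
        intro h
        subst h
        exact absurd hij' (by simp [Fin.lt_iff_val_lt_val])
      simp only [hE, Matrix.add_apply, Matrix.vecMulVec_apply]
      rw [Matrix.one_apply_ne (ne_of_lt hij')]
      by_cases hj1 : j = 1
      · subst hj1
        have hi0 : i = 0 := by
          have h1 : i.val < (1 : Fin (k + 2)).val := hij'
          rw [Fin.val_one] at h1
          apply Fin.ext
          rw [Fin.val_zero]
          omega
        subst hi0
        rw [hu0, hw0]
        ring
      · rw [he0, he1, Pi.single_eq_of_ne hjne0, Pi.single_eq_of_ne hj1]
        ring
    have := Matrix.det_of_lowerTriangular E htri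
    rw [this]
    have hdd : ∀ i, E i i = 1 := by
      intro i
      simp only [hE, Matrix.add_apply, Matrix.vecMulVec_apply, Matrix.one_apply_eq]
      have h1 : u i * e0 i = 0 := by
        by_cases hi : i = 0
        · subst hi; rw [hu0]; ring
        · rw [he0, Pi.single_eq_of_ne hi]; ring
      have h2 : w i * e1 i = 0 := by
        by_cases hi : i = 1
        · subst hi; rw [hw1]; ring
        · rw [he1, Pi.single_eq_of_ne hi]; ring
      rw [h1, h2]; ring
    rw [Finset.prod_congr rfl fun i _ => hdd i]
    simp
  set F : Matrix (Fin (k + 2)) (Fin (k + 2)) ℝ :=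
    N + Matrix.vecMulVec u (N 0) + Matrix.vecMulVec w (N 1) with hF
  have hEN : E * N = F := by
    rw [hE, hF, Matrix.add_mul, Matrix.add_mul, Matrix.one_mul,
      vecMulVec_mul, vecMulVec_mul, he0, he1,
      Matrix.single_one_vecMul, Matrix.single_one_vecMul]
    rfl
  have hET : Eᵀ = 1 + Matrix.vecMulVec e0 u + Matrix.vecMulVec e1 w := by
    rw [hE]
    simp only [Matrix.transpose_add, Matrix.transpose_one, transpose_vecMulVec]
  have hN2 : E * N * Eᵀ = F + Matrix.vecMulVec (Fᵀ 0) u + Matrix.vecMulVec (Fᵀ 1) w := by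
    rw [hEN, hET, Matrix.mul_add, Matrix.mul_add, Matrix.mul_one,
      mul_vecMulVec, mul_vecMulVec, he0, he1,
      Matrix.mulVec_single_one, Matrix.mulVec_single_one]
    rfl
  have hFab : ∀ a b, F a b = N a b + u a * N 0 b + w a * N 1 b := by
    intro a b
    simp [hF, Matrix.add_apply, Matrix.vecMulVec_apply]
  have hN2ab : ∀ a b, (E * N * Eᵀ) a b = F a b + F a 0 * u b + F a 1 * w b := by
    intro a b
    rw [hN2]
    simp [Matrix.add_apply, Matrix.vecMulVec_apply, Matrix.transpose_apply]
  refine ⟨E * N * Eᵀ, ⟨E, by rw [hEdet]; exact isUnit_one, rfl⟩, ?_, ?_⟩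
  · rw [hN2ab]
    simp only [hFab, hu0, hu1, hw0, hw1, h01]
    rw [hdiag, hdiag]
    ring
  · intro a ha
    have hua : u a = -N a 1 := by simp [hu, ha]
    have hwa : w a = N a 0 := by simp [hw, ha]
    have hFa0 : F a 0 = 0 := by
      rw [hFab, hua, hwa, hdiag, h10]; ring
    have hFa1 : F a 1 = 0 := by
      rw [hFab, hua, hwa, hdiag, h01]; ring
    constructor
    · rw [hN2ab, hFa0, hFa1, hu0, hw0]; ring
    · rw [hN2ab, hFa0, hFa1, hu1, hw1]; ring

/-- Main structural lemma: every skew-symmetric matrix is congruent to some `youlaQ n (2*s)`. -/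
lemma cong_youlaQ : ∀ (n : ℕ) (M : Matrix (Fin n) (Fin n) ℝ), Mᵀ = -M →
    ∃ (s : ℕ) (P : Matrix (Fin n) (Fin n) ℝ),
      IsUnit P.det ∧ 2 * s ≤ n ∧ P * M * Pᵀ = youlaQ n (2 * s) := by
  intro n
  induction n using Nat.strong_induction_on with
  | _ n ih =>
    intro M hM
    by_cases hM0 : M = 0
    · refine ⟨0, 1, by simp, by omega, ?_⟩
      subst hM0
      ext i j
      simp [youlaQ]
    · -- find a nonzero entry
      have hex : ∃ i j, M i j ≠ 0 := by
        by_contra h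
        push_neg at h
        exact hM0 (Matrix.ext fun i j => by rw [h i j, Matrix.zero_apply])
      obtain ⟨i, j, hij⟩ := hex
      have hdiag : ∀ a, M a a = 0 := by
        intro a
        have := congrFun (congrFun hM a) a
        simp only [Matrix.transpose_apply, Matrix.neg_apply] at this
        linarith
      have hne : i ≠ j := fun h => hij (h ▸ hdiag i)
      have h2n : 2 ≤ n := by
        have : Nontrivial (Fin n) := ⟨i, j, hne⟩
        have := Fintype.one_lt_card_iff_nontrivial.2 this
        simp at this; omega
      obtain ⟨k, rfl⟩ : ∃ k, n = k + 2 := ⟨n - 2, by omega⟩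
      -- step 1 : permute so the pivot is at (0,1)
      have h1ne0 : (1 : Fin (k + 2)) ≠ 0 := by
        intro h
        have := congrArg Fin.val h
        simp at this
      set τ : Equiv.Perm (Fin (k + 2)) := Equiv.swap 0 i with hτ
      set j' : Fin (k + 2) := τ j with hj'
      have hj'ne0 : j' ≠ 0 := by
        rw [hj']
        intro h
        have h2 : τ j = τ i := by rw [h, hτ, Equiv.swap_apply_right]
        exact hne (τ.injective h2).symm
      set υ : Equiv.Perm (Fin (k + 2)) := Equiv.swap 1 j' with hυ
      set σ : Equiv.Perm (Fin (k + 2)) := τ * υ with hσ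
      have hσ0 : σ 0 = i := by
        rw [hσ, Equiv.Perm.mul_apply, hυ,
          Equiv.swap_apply_of_ne_of_ne h1ne0.symm (Ne.symm hj'ne0), hτ,
          Equiv.swap_apply_left]
      have hσ1 : σ 1 = j := by
        rw [hσ, Equiv.Perm.mul_apply, hυ, Equiv.swap_apply_left, hj', hτ]
        exact Equiv.swap_apply_self _ _ _
      set M1 : Matrix (Fin (k + 2)) (Fin (k + 2)) ℝ := M.submatrix σ σ with hM1
      have hcong1 : Cong M M1 := cong_submatrix σ M
      have hM101 : M1 0 1 = M i j := by
        rw [hM1, Matrix.submatrix_apply, hσ0, hσ1]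
      -- step 2 : scale so the pivot is 1
      set c : ℝ := (M i j)⁻¹ with hc
      set d : Fin (k + 2) → ℝ := fun a => if a = 0 then c else 1 with hd
      have hdne : ∀ a, d a ≠ 0 := by
        intro a
        rw [hd]
        dsimp only
        split_ifs
        · exact inv_ne_zero hij
        · exact one_ne_zero
      set M2 : Matrix (Fin (k + 2)) (Fin (k + 2)) ℝ :=
        Matrix.diagonal d * M1 * Matrix.diagonal d with hM2
      have hcong2 : Cong M1 M2 := cong_diagonal d hdne M1
      have hM201 : M2 0 1 = 1 := by
        rw [hM2, Matrix.mul_diagonal, Matrix.diagonal_mul, hM101]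
        rw [hd]
        dsimp only
        rw [if_pos rfl, if_neg h1ne0]
        rw [hc]
        field_simp
      have hM2skew : M2ᵀ = -M2 := cong_skew (cong_trans hcong1 hcong2) hM
      -- step 3 : clear first two rows/columns
      obtain ⟨N2, hcong3, hN201, hN2clr⟩ := cong_clear M2 hM2skew hM201
      have hcongN2 : Cong M N2 := cong_trans (cong_trans hcong1 hcong2) hcong3
      have hN2skew : N2ᵀ = -N2 := cong_skew hcongN2 hM
      have hN2diag : ∀ a, N2 a a = 0 := by
        intro a
        have := congrFun (congrFun hN2skew a) a
        simp only [Matrix.transpose_apply, Matrix.neg_apply] at this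
        linarith
      have hN210 : N2 1 0 = -1 := by
        have := congrFun (congrFun hN2skew 0) 1
        simp only [Matrix.transpose_apply, Matrix.neg_apply] at this
        rw [this, hN201]
      have hN2clr' : ∀ b : Fin (k + 2), 2 ≤ b.val → N2 0 b = 0 ∧ N2 1 b = 0 := by
        intro b hb
        have h0 := congrFun (congrFun hN2skew b) 0
        have h1 := congrFun (congrFun hN2skew b) 1
        simp only [Matrix.transpose_apply, Matrix.neg_apply] at h0 h1
        obtain ⟨hb0, hb1⟩ := hN2clr b hb
        constructor
        · rw [h0, hb0]; ring
        · rw [h1, hb1]; ring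
      -- step 4 : block decomposition and induction
      set e : Fin 2 ⊕ Fin k ≃ Fin (k + 2) :=
        finSumFinEquiv.trans (finCongr (Nat.add_comm 2 k)) with he
      have heL : ∀ a : Fin 2, (e (Sum.inl a)).val = a.val := by
        intro a
        simp [he]
      have heR : ∀ b : Fin k, (e (Sum.inr b)).val = 2 + b.val := by
        intro b
        simp [he, Nat.add_comm]
      set K : Matrix (Fin k) (Fin k) ℝ :=
        fun a b => N2 (e (Sum.inr a)) (e (Sum.inr b)) with hK
      have hKskew : Kᵀ = -K := by
        ext a b
        have := congrFun (congrFun hN2skew (e (Sum.inr a))) (e (Sum.inr b))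
        simp only [Matrix.transpose_apply, Matrix.neg_apply] at this ⊢
        rw [hK]
        exact this
      obtain ⟨s, Pk, hPk, hs, hPK⟩ := ih k (by omega) K hKskew
      -- identify the block structure
      have heL0 : e (Sum.inl 0) = (0 : Fin (k + 2)) := by
        apply Fin.ext
        rw [heL, Fin.val_zero, Fin.val_zero]
      have heL1 : e (Sum.inl 1) = (1 : Fin (k + 2)) := by
        apply Fin.ext
        rw [heL, Fin.val_one, Fin.val_one]
      have htop : ∀ a b : Fin 2,
          N2 (e (Sum.inl a)) (e (Sum.inl b)) = !![(0 : ℝ), 1; -1, 0] a b := by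
        rw [Fin.forall_fin_two]
        constructor
        · rw [Fin.forall_fin_two]
          constructor
          · rw [heL0]
            simpa using hN2diag 0
          · rw [heL0, heL1]
            simpa using hN201
        · rw [Fin.forall_fin_two]
          constructor
          · rw [heL0, heL1]
            simpa using hN210
          · rw [heL1]
            simpa using hN2diag 1
      have hside1 : ∀ (a : Fin 2) (b : Fin k), N2 (e (Sum.inl a)) (e (Sum.inr b)) = 0 := by
        rw [Fin.forall_fin_two]
        constructor
        · intro b
          rw [heL0]
          exact (hN2clr' _ (by rw [heR]; omega)).1
        · intro b
          rw [heL1]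
          exact (hN2clr' _ (by rw [heR]; omega)).2
      have hside2 : ∀ (a : Fin k) (b : Fin 2), N2 (e (Sum.inr a)) (e (Sum.inl b)) = 0 := by
        intro a
        rw [Fin.forall_fin_two]
        constructor
        · rw [heL0]
          exact (hN2clr _ (by rw [heR]; omega)).1
        · rw [heL1]
          exact (hN2clr _ (by rw [heR]; omega)).2
      have hblock : N2.submatrix e e =
          Matrix.fromBlocks !![(0 : ℝ), 1; -1, 0] 0 0 K := by
        ext x y
        cases x with
        | inl a =>
          cases y with
          | inl b =>
            rw [Matrix.submatrix_apply, Matrix.fromBlocks_apply₁₁]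
            exact htop a b
          | inr b =>
            rw [Matrix.submatrix_apply, Matrix.fromBlocks_apply₁₂, Matrix.zero_apply]
            exact hside1 a b
        | inr a =>
          cases y with
          | inl b =>
            rw [Matrix.submatrix_apply, Matrix.fromBlocks_apply₂₁, Matrix.zero_apply]
            exact hside2 a b
          | inr b =>
            rw [Matrix.submatrix_apply, Matrix.fromBlocks_apply₂₂]
      set Pb : Matrix (Fin 2 ⊕ Fin k) (Fin 2 ⊕ Fin k) ℝ :=
        Matrix.fromBlocks 1 0 0 Pk with hPb
      have hPbdet : IsUnit Pb.det := by
        rw [hPb, Matrix.det_fromBlocks_zero₂₁]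
        simpa using hPk
      have hPbmul : Pb * (Matrix.fromBlocks !![(0 : ℝ), 1; -1, 0] 0 0 K) * Pbᵀ =
          Matrix.fromBlocks !![(0 : ℝ), 1; -1, 0] 0 0 (youlaQ k (2 * s)) := by
        rw [hPb, Matrix.fromBlocks_transpose, Matrix.fromBlocks_multiply,
          Matrix.fromBlocks_multiply]
        simp [Matrix.mul_assoc]
        rw [← Matrix.mul_assoc, hPK]
      set P3 : Matrix (Fin (k + 2)) (Fin (k + 2)) ℝ :=
        Pb.submatrix e.symm e.symm with hP3
      have hP3det : IsUnit P3.det := by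
        rw [hP3, Matrix.det_submatrix_equiv_self]
        exact hPbdet
      have hN2eq : N2 =
          (Matrix.fromBlocks !![(0 : ℝ), 1; -1, 0] 0 0 K).submatrix e.symm e.symm := by
        rw [← hblock]
        ext x y
        simp [Matrix.submatrix_apply]
      have hP3mul : P3 * N2 * P3ᵀ =
          (Matrix.fromBlocks !![(0 : ℝ), 1; -1, 0] 0 0
            (youlaQ k (2 * s))).submatrix e.symm e.symm := by
        rw [hP3, hN2eq, Matrix.transpose_submatrix, Matrix.submatrix_mul_equiv,
          Matrix.submatrix_mul_equiv, hPbmul]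
      -- identify with youlaQ (k+2) (2*(s+1))
      have hQtop : ∀ a b : Fin 2, (!![(0 : ℝ), 1; -1, 0]) a b =
          youlaQ (k + 2) (2 * (s + 1)) (e (Sum.inl a)) (e (Sum.inl b)) := by
        have hv0 : (e (Sum.inl 0)).val = 0 := by rw [heL, Fin.val_zero]
        have hv1 : (e (Sum.inl 1)).val = 1 := by rw [heL, Fin.val_one]
        rw [Fin.forall_fin_two]
        constructor
        · rw [Fin.forall_fin_two]
          constructor
          · rw [youlaQ_eq_zero (by omega) (by omega)]
            norm_num
          · rw [youlaQ_eq_one (by omega) (by omega) (by omega)]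
            norm_num
        · rw [Fin.forall_fin_two]
          constructor
          · rw [youlaQ_eq_neg_one (by omega) (by omega) (by omega)]
            norm_num
          · rw [youlaQ_eq_zero (by omega) (by omega)]
            norm_num
      have hQeq : (Matrix.fromBlocks !![(0 : ℝ), 1; -1, 0] 0 0
            (youlaQ k (2 * s))).submatrix e.symm e.symm =
          youlaQ (k + 2) (2 * (s + 1)) := by
        have key : ∀ (x : Fin 2 ⊕ Fin k) (y : Fin 2 ⊕ Fin k),
            Matrix.fromBlocks !![(0 : ℝ), 1; -1, 0] 0 0 (youlaQ k (2 * s)) x y =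
            youlaQ (k + 2) (2 * (s + 1)) (e x) (e y) := by
          intro x y
          cases x with
          | inl a =>
            cases y with
            | inl b =>
              rw [Matrix.fromBlocks_apply₁₁]
              exact hQtop a b
            | inr b =>
              have hav := heL a
              have hbv := heR b
              have ha2 : a.val < 2 := a.isLt
              rw [Matrix.fromBlocks_apply₁₂, Matrix.zero_apply,
                youlaQ_eq_zero (by omega) (by omega)]
          | inr a =>
            cases y with
            | inl b =>
              have hav := heR a
              have hbv := heL b
              have hb2 : b.val < 2 := b.isLt
              rw [Matrix.fromBlocks_apply₂₁, Matrix.zero_apply,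
                youlaQ_eq_zero (by omega) (by omega)]
            | inr b =>
              have hav := heR a
              have hbv := heR b
              rw [Matrix.fromBlocks_apply₂₂]
              simp only [youlaQ, hav, hbv]
              have hmod : (2 + a.val) % 2 = a.val % 2 := by omega
              have hmod' : (2 + b.val) % 2 = b.val % 2 := by omega
              rw [hmod, hmod']
              split_ifs <;> first | rfl | omega
        ext x y
        rw [Matrix.submatrix_apply, key, Equiv.apply_symm_apply, Equiv.apply_symm_apply]
      -- assemble
      obtain ⟨P0, hP0, hP0M⟩ := hcongN2
      refine ⟨s + 1, P3 * P0, ?_, by omega, ?_⟩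
      · rw [Matrix.det_mul]
        exact hP3det.mul hP0
      · rw [Matrix.transpose_mul, show P3 * P0 * M * (P0ᵀ * P3ᵀ) =
          P3 * (P0 * M * P0ᵀ) * P3ᵀ by noncomm_ring, hP0M, hP3mul, hQeq]

/-- The rank of `youlaQ n (2*s)` is `2*s`. -/
lemma rank_youlaQ (n s : ℕ) (h : 2 * s ≤ n) : (youlaQ n (2 * s)).rank = 2 * s := by
  set r := 2 * s with hr
  set Q := youlaQ n r with hQdef
  set d : Fin n → ℝ := fun i => if i.val < r then 1 else 0 with hd
  have hcard : ∀ c : ℝ, c ≠ 0 →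
      Fintype.card {i : Fin n // (if i.val < r then c else 0) ≠ 0} = r := by
    intro c hc
    have e1 : {i : Fin n // (if i.val < r then c else 0) ≠ 0} ≃ {i : Fin n // i.val < r} :=
      Equiv.subtypeEquivRight (by
        intro i
        by_cases hi : i.val < r <;> simp [hi, hc])
    have e2 : {i : Fin n // i.val < r} ≃ Fin r :=
      { toFun := fun x => ⟨x.1.val, x.2⟩
        invFun := fun a => ⟨⟨a.val, lt_of_lt_of_le a.isLt h⟩, a.isLt⟩
        left_inv := fun x => rfl
        right_inv := fun a => rfl }
    rw [Fintype.card_congr (e1.trans e2), Fintype.card_fin]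
  -- Q * diagonal d = Q
  have hQD : Q * Matrix.diagonal d = Q := by
    ext i j
    rw [Matrix.mul_diagonal]
    by_cases hj : j.val < r
    · simp [hd, hj]
    · have hQij : Q i j = 0 := by
        rw [hQdef]
        exact youlaQ_eq_zero (by omega) (by omega)
      simp [hd, hj, hQij]
  -- Q * Q = diagonal (-indicator)
  have hQQ : Q * Q = Matrix.diagonal (fun i : Fin n => if i.val < r then (-1 : ℝ) else 0) := by
    ext i j
    rw [Matrix.mul_apply]
    by_cases hir : i.val < r
    · by_cases hpar : i.val % 2 = 0
      · -- even row
        have hi1 : i.val + 1 < r := by omega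
        set i1 : Fin n := ⟨i.val + 1, by omega⟩ with hi1def
        have hv1 : i1.val = i.val + 1 := rfl
        have hrow : ∀ x : Fin n, Q i x = if x = i1 then 1 else 0 := by
          intro x
          by_cases hx : x = i1
          · subst hx
            rw [if_pos rfl, hQdef]
            exact youlaQ_eq_one hpar hv1 hi1
          · rw [if_neg hx, hQdef]
            refine youlaQ_eq_zero ?_ ?_
            · rintro ⟨-, h2, -⟩
              exact hx (Fin.ext (by omega))
            · rintro ⟨h1, h2, -⟩
              omega
        have hsum : ∑ x : Fin n, Q i x * Q x j = Q i1 j := by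
          rw [Finset.sum_congr rfl fun x _ => by rw [hrow x]]
          simp [ite_mul]
        rw [hsum, Matrix.diagonal_apply]
        by_cases hji : i = j
        · subst hji
          rw [if_pos rfl, if_pos hir, hQdef]
          exact youlaQ_eq_neg_one hpar hv1 hi1
        · rw [if_neg hji, hQdef]
          refine youlaQ_eq_zero ?_ ?_
          · rintro ⟨h1, -, -⟩
            omega
          · rintro ⟨-, h2, -⟩
            exact hji (Fin.ext (by omega))
      · -- odd row
        have hi0lt : i.val - 1 < r := by omega
        set i0 : Fin n := ⟨i.val - 1, by omega⟩ with hi0def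
        have hv0 : i0.val = i.val - 1 := rfl
        have hrow : ∀ x : Fin n, Q i x = if x = i0 then -1 else 0 := by
          intro x
          by_cases hx : x = i0
          · subst hx
            rw [if_pos rfl, hQdef]
            exact youlaQ_eq_neg_one (by omega) (by omega) hir
          · rw [if_neg hx, hQdef]
            refine youlaQ_eq_zero ?_ ?_
            · rintro ⟨h1, -, -⟩
              omega
            · rintro ⟨-, h2, -⟩
              exact hx (Fin.ext (by omega))
        have hsum : ∑ x : Fin n, Q i x * Q x j = -Q i0 j := by
          rw [Finset.sum_congr rfl fun x _ => by rw [hrow x]]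
          simp [ite_mul]
        rw [hsum, Matrix.diagonal_apply]
        by_cases hji : i = j
        · subst hji
          rw [if_pos rfl, if_pos hir, hQdef]
          rw [youlaQ_eq_one (by omega) (by omega) (by omega)]
        · rw [if_neg hji, hQdef]
          have hz : youlaQ n r i0 j = 0 := by
            refine youlaQ_eq_zero ?_ ?_
            · rintro ⟨-, h2, -⟩
              exact hji (Fin.ext (by omega))
            · rintro ⟨h1, h2, -⟩
              omega
          rw [hz]
          ring
    · -- zero row
      have hrow : ∀ x : Fin n, Q i x = 0 := by
        intro x
        rw [hQdef]
        exact youlaQ_eq_zero (by omega) (by omega)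
      have hsum : ∑ x : Fin n, Q i x * Q x j = 0 := by
        rw [Finset.sum_congr rfl fun x _ => by rw [hrow x, zero_mul]]
        simp
      rw [hsum, Matrix.diagonal_apply]
      by_cases hji : i = j
      · subst hji
        rw [if_pos rfl, if_neg hir]
      · rw [if_neg hji]
  have hle1 : Q.rank ≤ r := by
    calc Q.rank = (Q * Matrix.diagonal d).rank := by rw [hQD]
    _ ≤ (Matrix.diagonal d).rank := Matrix.rank_mul_le_right _ _
    _ = r := by
        rw [Matrix.rank_diagonal]
        exact hcard 1 one_ne_zero
  have hle2 : r ≤ Q.rank := by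
    calc r = (Matrix.diagonal (fun i : Fin n => if i.val < r then (-1 : ℝ) else 0)).rank := by
          rw [Matrix.rank_diagonal]
          exact (hcard (-1) (by norm_num)).symm
    _ = (Q * Q).rank := by rw [hQQ]
    _ ≤ Q.rank := Matrix.rank_mul_le_left _ _
  omega

end YoulaAux

/-- Youla decomposition: every real skew-symmetric `n × n` matrix `M` of rank `r`
can be written as `M = P Q Pᵀ` with `P` invertible. -/
theorem youla_decomposition {n r : ℕ} (M : Matrix (Fin n) (Fin n) ℝ)
    (hM : Mᵀ = -M) (hrank : M.rank = r) :
    ∃ P : Matrix (Fin n) (Fin n) ℝ, IsUnit P.det ∧ M = P * youlaQ n r * Pᵀ := by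
  obtain ⟨s, P, hP, hs, hPQ⟩ := YoulaAux.cong_youlaQ n M hM
  have hPT : IsUnit Pᵀ.det := by rw [Matrix.det_transpose]; exact hP
  have hrankQ : (youlaQ n (2 * s)).rank = 2 * s := YoulaAux.rank_youlaQ n s hs
  have hrankM : M.rank = 2 * s := by
    rw [← hrankQ, ← hPQ, Matrix.mul_assoc,
      Matrix.rank_mul_eq_right_of_isUnit_det P _ hP,
      Matrix.rank_mul_eq_left_of_isUnit_det Pᵀ M hPT]
  have hr2s : r = 2 * s := by rw [← hrank, hrankM]
  haveI : Invertible P := P.invertibleOfIsUnitDet hP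
  refine ⟨P⁻¹, P.isUnit_nonsing_inv_det hP, ?_⟩
  rw [hr2s, ← hPQ, Matrix.transpose_nonsing_inv]
  rw [Matrix.mul_assoc P M Pᵀ, Matrix.inv_mul_cancel_left_of_invertible,
    Matrix.mul_inv_cancel_right_of_invertible]
end
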